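/- Let κ ≠ 0 and a < b < c be real numbers. Consider the lines ℓ_B : y = κ(b + (c + a)/2)x − κ b(c + a)/2 and ℓ_C : y = κ(c + (a + b)/2)x − κ c(a + b)/2 (the bisectors of the positive difference angles at B = (b, κb²) and C = (c, κc²) of the triangle inscribed in y = κx²). Then ℓ_B and ℓ_C intersect in a unique point D, and D = (a, κ(a² + ab − bc + ca)/2), which is exactly the midpoint of the segment from A = (a, κa²) to A' = (a, κ(ab − bc + ca)), where A' is the foot of the vertical DA perpendicular from A to the side BC (the line y = κ(b + c)x − κbc). -/
import Mathlib


/-- Bisectors and midpoints of the feet: for `κ ≠ 0` and `a < b < c`, the bisectors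
`ℓ_B` and `ℓ_C` of the positive DA angles at `B` and `C` of the triangle inscribed
in `y = κ x²` meet in a unique point `D = (a, κ(a² + ab − bc + ca)/2)`, which is
the midpoint of `A = (a, κa²)` and the foot `A' = (a, κ(ab − bc + ca))` of the
vertical DA perpendicular from `A` to `BC`. -/
theorem bisectors_meet_at_midpoint_of_foot (κ a b c : ℝ)
    (hκ : κ ≠ 0) (hab : a < b) (hbc : b < c) :
    (∃! D : ℝ × ℝ,
        D.2 = κ * (b + (c + a) / 2) * D.1 - κ * b * (c + a) / 2 ∧
        D.2 = κ * (c + (a + b) / 2) * D.1 - κ * c * (a + b) / 2) ∧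
    ∀ D : ℝ × ℝ,
      D.2 = κ * (b + (c + a) / 2) * D.1 - κ * b * (c + a) / 2 →
      D.2 = κ * (c + (a + b) / 2) * D.1 - κ * c * (a + b) / 2 →
      D = ((a : ℝ), κ * (a ^ 2 + a * b - b * c + c * a) / 2) ∧
      D = (((a + a) / 2 : ℝ), (κ * a ^ 2 + κ * (a * b - b * c + c * a)) / 2) := by
  have hbc' : b - c ≠ 0 := sub_ne_zero.mpr hbc.ne
  have key : ∀ D : ℝ × ℝ,
      D.2 = κ * (b + (c + a) / 2) * D.1 - κ * b * (c + a) / 2 →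
      D.2 = κ * (c + (a + b) / 2) * D.1 - κ * c * (a + b) / 2 →
      D = ((a : ℝ), κ * (a ^ 2 + a * b - b * c + c * a) / 2) := by
    rintro ⟨x, y⟩ h1 h2
    simp only at h1 h2
    have hx : x = a := by
      have h3 : κ * (b - c) / 2 * x = κ * (b - c) / 2 * a := by
        have := h1.symm.trans h2
        ring_nf at this ⊢
        linarith
      have hne : κ * (b - c) / 2 ≠ 0 := by positivity
      exact mul_left_cancel₀ hne h3
    subst hx
    have : y = κ * (x ^ 2 + x * b - b * c + c * x) / 2 := by rw [h1]; ring
    simp [this]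
  refine ⟨⟨((a : ℝ), κ * (a ^ 2 + a * b - b * c + c * a) / 2), ⟨by ring, by ring⟩,
      fun D hD => key D hD.1 hD.2⟩, fun D h1 h2 => ⟨key D h1 h2, ?_⟩⟩
  rw [key D h1 h2]
  norm_num
  ring
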